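/- For integers m even, a even, let B(N,μ) denote the N×N matrix with entries binomial(μ+i+j, j), 0 ≤ i,j ≤ N-1, and I(N) the identity. Then the (a×a) determinant det_{0≤i,j≤a-1}(δ_{ij} + (-1)^j [m+i+j choose j]_{-1}) (with [·]_{-1} the q-binomial at q=-1) equals det(I(a/2) + B(a/2, m/2) + B(a/2, m/2)²). -/
import Mathlib

noncomputable def qbinom : ℕ → ℕ → Polynomial ℤ
  | _, 0 => 1
  | 0, _ + 1 => 0
  | n + 1, k + 1 => qbinom n k + Polynomial.X ^ (k + 1) * qbinom n (k + 1)

lemma qbinom_eval : ∀ n k : ℕ, (qbinom n k).eval (-1) =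
    if n % 2 = 0 ∧ k % 2 = 1 then 0 else (Nat.choose (n/2) (k/2) : ℤ) := by
  intro n
  induction n with
  | zero =>
    intro k
    match k with
    | 0 => simp [qbinom]
    | k+1 =>
      simp only [qbinom, Polynomial.eval_zero]
      split_ifs with h
      · rfl
      · have hk : (k+1) % 2 = 0 := by
          by_contra hc
          exact h ⟨by norm_num, by omega⟩
        rw [Nat.choose_eq_zero_of_lt (by omega)]
        simp
  | succ n ih =>
    intro k
    match k with
    | 0 => simp [qbinom]
    | k+1 =>
      rw [qbinom]
      simp only [Polynomial.eval_add, Polynomial.eval_mul, Polynomial.eval_pow,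
        Polynomial.eval_X]
      rw [ih k, ih (k+1)]
      rcases Nat.even_or_odd n with hn | hn <;> rcases Nat.even_or_odd k with hk | hk <;>
        [rw [Nat.even_iff] at hn; rw [Nat.even_iff] at hn; rw [Nat.odd_iff] at hn;
          rw [Nat.odd_iff] at hn] <;>
        [rw [Nat.even_iff] at hk; rw [Nat.odd_iff] at hk; rw [Nat.even_iff] at hk;
          rw [Nat.odd_iff] at hk]
      · -- n even, k even
        have e1 : ¬(n % 2 = 0 ∧ k % 2 = 1) := by omega
        have e2 : (n % 2 = 0 ∧ (k+1) % 2 = 1) := by omega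
        have e3 : ¬((n+1) % 2 = 0 ∧ (k+1) % 2 = 1) := by omega
        rw [if_neg e1, if_pos e2, if_neg e3]
        have h1 : (n+1)/2 = n/2 := by omega
        have h2 : (k+1)/2 = k/2 := by omega
        rw [h1, h2]; ring
      · -- n even, k odd
        have e1 : (n % 2 = 0 ∧ k % 2 = 1) := by omega
        have e2 : ¬(n % 2 = 0 ∧ (k+1) % 2 = 1) := by omega
        have e3 : ¬((n+1) % 2 = 0 ∧ (k+1) % 2 = 1) := by omega
        rw [if_pos e1, if_neg e2, if_neg e3]
        have hp : Even (k+1) := by rw [Nat.even_iff]; omega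
        rw [hp.neg_one_pow]
        have h1 : (n+1)/2 = n/2 := by omega
        rw [h1]; ring
      · -- n odd, k even
        have e1 : ¬(n % 2 = 0 ∧ k % 2 = 1) := by omega
        have e2 : ¬(n % 2 = 0 ∧ (k+1) % 2 = 1) := by omega
        have e3 : ((n+1) % 2 = 0 ∧ (k+1) % 2 = 1) := by omega
        rw [if_neg e1, if_neg e2, if_pos e3]
        have hp : Odd (k+1) := by rw [Nat.odd_iff]; omega
        rw [hp.neg_one_pow]
        have h2 : (k+1)/2 = k/2 := by omega
        rw [h2]; ring
      · -- n odd, k odd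
        have e1 : ¬(n % 2 = 0 ∧ k % 2 = 1) := by omega
        have e2 : ¬(n % 2 = 0 ∧ (k+1) % 2 = 1) := by omega
        have e3 : ¬((n+1) % 2 = 0 ∧ (k+1) % 2 = 1) := by omega
        rw [if_neg e1, if_neg e2, if_neg e3]
        have hp : Even (k+1) := by rw [Nat.even_iff]; omega
        rw [hp.neg_one_pow]
        have h1 : (n+1)/2 = n/2 + 1 := by omega
        have h2 : (k+1)/2 = k/2 + 1 := by omega
        rw [h1, h2, Nat.choose_succ_succ]
        push_cast; ring

def pairEquiv (N a : ℕ) (h : 2 * N = a) : Fin N ⊕ Fin N ≃ Fin a where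
  toFun x := Sum.elim (fun s => ⟨2*s.val, by omega⟩) (fun s => ⟨2*s.val+1, by omega⟩) x
  invFun i := if i.val % 2 = 0 then Sum.inl ⟨i.val/2, by omega⟩ else Sum.inr ⟨i.val/2, by omega⟩
  left_inv := by
    rintro (⟨s,hs⟩|⟨s,hs⟩) <;> dsimp only [Sum.elim_inl, Sum.elim_inr]
    · rw [if_pos (by omega)]
      simp only [Sum.inl.injEq, Fin.mk.injEq]; omega
    · rw [if_neg (by omega)]
      simp only [Sum.inr.injEq, Fin.mk.injEq]; omega
  right_inv := by
    rintro ⟨i,hi⟩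
    dsimp only
    by_cases h2 : i % 2 = 0
    · rw [if_pos h2]; simp only [Sum.elim_inl, Fin.mk.injEq]; omega
    · rw [if_neg h2]; simp only [Sum.elim_inr, Fin.mk.injEq]; omega

theorem stmt9 (a m : ℕ) (ha : Even a) (hm : Even m) :
    let B : Matrix (Fin (a / 2)) (Fin (a / 2)) ℚ :=
      Matrix.of fun i j => (Nat.choose (m / 2 + i.val + j.val) j.val : ℚ)
    Matrix.det (Matrix.of fun i j : Fin a =>
        (if i = j then (1 : ℚ) else 0) +
          (-1 : ℚ) ^ j.val * (((qbinom (m + i.val + j.val) j.val).eval (-1) : ℤ) : ℚ)) =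
      Matrix.det (1 + B + B * B) := by
  intro B
  rw [Nat.even_iff] at ha hm
  have h2 : 2 * (a / 2) = a := by omega
  set M : Matrix (Fin a) (Fin a) ℚ := Matrix.of fun i j : Fin a =>
      (if i = j then (1 : ℚ) else 0) +
        (-1 : ℚ) ^ j.val * (((qbinom (m + i.val + j.val) j.val).eval (-1) : ℤ) : ℚ) with hM
  set e := pairEquiv (a/2) a h2 with he
  have key : M.submatrix e e = Matrix.fromBlocks (1 + B) (-B) B 1 := by
    ext x y
    rcases x with s | s <;> rcases y with t | t <;>
      simp only [Matrix.submatrix_apply, he, pairEquiv, Equiv.coe_fn_mk, Sum.elim_inl,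
        Sum.elim_inr, hM, Matrix.of_apply, Matrix.fromBlocks_apply₁₁, Matrix.fromBlocks_apply₁₂,
        Matrix.fromBlocks_apply₂₁, Matrix.fromBlocks_apply₂₂, Fin.mk.injEq, qbinom_eval]
    · -- row 2s, col 2t
      rw [if_neg (show ¬((m + 2*s.val + 2*t.val) % 2 = 0 ∧ 2*t.val % 2 = 1) by omega)]
      rw [show (m + 2*s.val + 2*t.val)/2 = m/2 + s.val + t.val by omega,
        show 2*t.val/2 = t.val by omega,
        show (-1 : ℚ) ^ (2*t.val) = 1 from Even.neg_one_pow ⟨t.val, by ring⟩, one_mul]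
      simp only [Matrix.add_apply, Matrix.one_apply, B, Matrix.of_apply]
      by_cases hst : s = t
      · rw [if_pos (show 2*s.val = 2*t.val by rw [hst]), if_pos hst]; push_cast; ring
      · rw [if_neg (show ¬(2*s.val = 2*t.val) from fun hh => hst (Fin.ext (by omega))),
          if_neg hst]
        push_cast; ring
    · -- row 2s, col 2t+1
      rw [if_neg (show ¬((m + 2*s.val + (2*t.val+1)) % 2 = 0 ∧ (2*t.val+1) % 2 = 1) by omega)]
      rw [if_neg (show ¬(2*s.val = 2*t.val+1) by omega)]
      rw [show (m + 2*s.val + (2*t.val+1))/2 = m/2 + s.val + t.val by omega,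
        show (2*t.val+1)/2 = t.val by omega,
        show (-1 : ℚ) ^ (2*t.val+1) = -1 from Odd.neg_one_pow ⟨t.val, by ring⟩]
      simp only [Matrix.neg_apply, B, Matrix.of_apply]
      push_cast; ring
    · -- row 2s+1, col 2t
      rw [if_neg (show ¬((m + (2*s.val+1) + 2*t.val) % 2 = 0 ∧ 2*t.val % 2 = 1) by omega)]
      rw [if_neg (show ¬(2*s.val+1 = 2*t.val) by omega)]
      rw [show (m + (2*s.val+1) + 2*t.val)/2 = m/2 + s.val + t.val by omega,
        show 2*t.val/2 = t.val by omega,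
        show (-1 : ℚ) ^ (2*t.val) = 1 from Even.neg_one_pow ⟨t.val, by ring⟩]
      simp only [B, Matrix.of_apply]
      push_cast; ring
    · -- row 2s+1, col 2t+1
      rw [if_pos (show ((m + (2*s.val+1) + (2*t.val+1)) % 2 = 0 ∧ (2*t.val+1) % 2 = 1) by omega)]
      simp only [Matrix.one_apply, Int.cast_zero, mul_zero, add_zero]
      by_cases hst : s = t
      · rw [if_pos (show 2*s.val+1 = 2*t.val+1 by rw [hst]), if_pos hst]
      · rw [if_neg (show ¬(2*s.val+1 = 2*t.val+1) from fun hh => hst (Fin.ext (by omega))),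
          if_neg hst]
  calc M.det = (M.submatrix e e).det := (Matrix.det_submatrix_equiv_self e M).symm
    _ = (Matrix.fromBlocks (1 + B) (-B) B 1).det := by rw [key]
    _ = ((1 + B) - (-B) * B).det := Matrix.det_fromBlocks_one₂₂ _ _ _
    _ = (1 + B + B * B).det := by rw [Matrix.neg_mul, sub_neg_eq_add]
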